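/- For every integer N ≥ 2, in U(gl(N|1))[[t]] the elements T, T', H, E built from the longest bosonic root vector e_{1N} satisfy the Jordanian U_h(sl(2)) relations: T·T' = T'·T = 1, [H, T] = T² − 1, [H, T'] = T'² − 1, [T, E] = (t/2)(HT + TH), [T', E] = −(t/2)(HT' + T'H), and [H, E] = −(1/2)((T + T')E + E(T + T')). (This is the general-N embedding of Ohn's Jordanian sl(2) underlying the nonlinear realization of U_h(sl(N|1)) of Proposition 7.) -/

import Mathlib

noncomputable section

namespace SuperJordanian

open scoped BigOperators

/-- The generalized binomial coefficient `C(1/2, n)`. -/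
def cHalf (n : ℕ) : ℂ :=
  (∏ i ∈ Finset.range n, ((1 : ℂ) / 2 - (i : ℂ))) / (n.factorial : ℂ)

/-- Parity for `gl(N|1)`: `p(i,j) = 1` iff exactly one of `i`, `j` equals the last
index `N+1` (here `Fin.last N` in 0-based indexing). -/
def par (N : ℕ) (i j : Fin (N + 1)) : ℕ :=
  if (i = Fin.last N ∧ j ≠ Fin.last N) ∨ (i ≠ Fin.last N ∧ j = Fin.last N) then 1 else 0

/-- The generator `e_{ij}` in the free algebra. -/
def gen (N : ℕ) (i j : Fin (N + 1)) : FreeAlgebra ℂ (Fin (N + 1) × Fin (N + 1)) :=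
  FreeAlgebra.ι ℂ (i, j)

/-- Defining relations of the enveloping algebra `U(gl(N|1))`:
`e_{ij} e_{kl} - (-1)^{p(i,j)p(k,l)} e_{kl} e_{ij}
  = δ_{jk} e_{il} - (-1)^{p(i,j)p(k,l)} δ_{li} e_{kj}`. -/
inductive Rel (N : ℕ) :
    FreeAlgebra ℂ (Fin (N + 1) × Fin (N + 1)) → FreeAlgebra ℂ (Fin (N + 1) × Fin (N + 1)) → Prop
  | mk (i j k l : Fin (N + 1)) :
      Rel N (gen N i j * gen N k l
          - ((-1 : ℂ) ^ (par N i j * par N k l)) • (gen N k l * gen N i j))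
        ((if j = k then gen N i l else 0)
          - ((-1 : ℂ) ^ (par N i j * par N k l)) • (if l = i then gen N k j else 0))

/-- The enveloping algebra `U = U(gl(N|1))`. -/
abbrev U (N : ℕ) : Type := RingQuot (Rel N)

/-- The image of `e_{ij}` in `U`. -/
def e (N : ℕ) (i j : Fin (N + 1)) : U N := RingQuot.mkAlgHom ℂ (Rel N) (gen N i j)

/-- The index `N` in the 1-based labelling, i.e. `N - 1` in 0-based indexing. -/
def idxN (N : ℕ) : Fin (N + 1) := ⟨N - 1, by omega⟩

/-- The longest bosonic root vector `e_{1N}`. -/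
def e1N (N : ℕ) : U N := e N 0 (idxN N)

/-- `h_{1N} = e₁₁ − e_{NN}`. -/
def h1N (N : ℕ) : U N := e N 0 0 - e N (idxN N) (idxN N)

/-- `e_{N1}`. -/
def eN1 (N : ℕ) : U N := e N (idxN N) 0

/-- The central formal variable `t` in `U[[t]]`. -/
def tv (N : ℕ) : PowerSeries (U N) := PowerSeries.X

/-- The inclusion `U → U[[t]]` as constant power series. -/
def C (N : ℕ) : U N →+* PowerSeries (U N) := PowerSeries.C

/-- `s = Σ_{n ≥ 0} C(1/2, n) t^{2n} e_{1N}^{2n}`, so that `s² = 1 + t² e_{1N}²`. -/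
def s (N : ℕ) : PowerSeries (U N) :=
  PowerSeries.mk fun m => if m % 2 = 0 then cHalf (m / 2) • (e1N N ^ m) else 0

/-- `T = t e_{1N} + √(1 + t² e_{1N}²)`. -/
def T (N : ℕ) : PowerSeries (U N) := tv N * C N (e1N N) + s N

/-- `T' = −t e_{1N} + √(1 + t² e_{1N}²)`. -/
def T' (N : ℕ) : PowerSeries (U N) := -(tv N * C N (e1N N)) + s N

/-- `H = √(1 + t² e_{1N}²) h_{1N}`. -/
def H (N : ℕ) : PowerSeries (U N) := s N * C N (h1N N)

/-- `E = e_{N1} − (t²/4) e_{1N} (h_{1N}² − 1)`. -/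
def E (N : ℕ) : PowerSeries (U N) :=
  C N (eN1 N) - ((1 : ℂ) / 4) • (tv N ^ 2 * C N (e1N N * (h1N N ^ 2 - 1)))

/-- Commutator `[a, b] = ab - ba`. -/
def br {N : ℕ} (a b : PowerSeries (U N)) : PowerSeries (U N) := a * b - b * a


/-! ### U-level commutation lemmas -/

section ULevel
variable (N : ℕ)

lemma par_eq_zero {i j : Fin (N+1)} (hi : i ≠ Fin.last N) (hj : j ≠ Fin.last N) :
    par N i j = 0 := by simp [par, hi, hj]

lemma rel_apply (i j k l : Fin (N+1)) (hp : par N i j * par N k l = 0) :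
    e N i j * e N k l - e N k l * e N i j
      = (if j = k then e N i l else 0) - (if l = i then e N k j else 0) := by
  have h := RingQuot.mkAlgHom_rel ℂ (Rel.mk (N := N) i j k l)
  rw [hp, pow_zero, one_smul] at h
  simpa [e, map_sub, map_mul, apply_ite (RingQuot.mkAlgHom ℂ (Rel N))] using h

variable {N}

lemma zero_ne_last (hN : 2 ≤ N) : (0 : Fin (N+1)) ≠ Fin.last N := by
  intro h
  have h' : (0 : ℕ) = N := by simpa using congrArg Fin.val h
  omega

lemma idxN_ne_last (hN : 2 ≤ N) : idxN N ≠ Fin.last N := by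
  intro h
  have h' : N - 1 = N := by simpa [idxN] using congrArg Fin.val h
  omega

lemma idxN_ne_zero (hN : 2 ≤ N) : idxN N ≠ 0 := by
  intro h
  have h' : N - 1 = 0 := by simpa [idxN] using congrArg Fin.val h
  omega

lemma h_mul_a (hN : 2 ≤ N) :
    h1N N * e1N N = e1N N * h1N N + (2:ℂ) • e1N N := by
  have hz := zero_ne_last hN
  have hm := idxN_ne_last hN
  have hmz := idxN_ne_zero hN
  have t1 := rel_apply N 0 0 0 (idxN N)
    (by rw [par_eq_zero N hz hz, zero_mul])
  have t2 := rel_apply N (idxN N) (idxN N) 0 (idxN N)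
    (by rw [par_eq_zero N hm hm, zero_mul])
  rw [if_pos rfl, if_neg hmz, sub_zero] at t1
  rw [if_neg hmz, if_pos rfl, zero_sub] at t2
  have t1' : e N 0 0 * e N 0 (idxN N) = e N 0 (idxN N) * e N 0 0 + e N 0 (idxN N) :=
    sub_eq_iff_eq_add'.mp t1
  have t2' : e N (idxN N) (idxN N) * e N 0 (idxN N)
      = e N 0 (idxN N) * e N (idxN N) (idxN N) - e N 0 (idxN N) := by
    rw [sub_eq_iff_eq_add.mp t2]; abel
  unfold h1N e1N
  rw [sub_mul, mul_sub, t1', t2']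
  module

lemma a_mul_f (hN : 2 ≤ N) :
    e1N N * eN1 N = eN1 N * e1N N + h1N N := by
  have hz := zero_ne_last hN
  have hm := idxN_ne_last hN
  have hmz := idxN_ne_zero hN
  have t := rel_apply N 0 (idxN N) (idxN N) 0
    (by rw [par_eq_zero N hz hm, zero_mul])
  rw [if_pos rfl, if_pos rfl] at t
  unfold h1N e1N eN1
  rw [sub_eq_iff_eq_add.mp t]
  abel

lemma h_mul_f (hN : 2 ≤ N) :
    h1N N * eN1 N = eN1 N * h1N N - (2:ℂ) • eN1 N := by
  have hz := zero_ne_last hN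
  have hm := idxN_ne_last hN
  have hmz := idxN_ne_zero hN
  have t1 := rel_apply N 0 0 (idxN N) 0
    (by rw [par_eq_zero N hz hz, zero_mul])
  have t2 := rel_apply N (idxN N) (idxN N) (idxN N) 0
    (by rw [par_eq_zero N hm hm, zero_mul])
  rw [if_neg (Ne.symm hmz), if_pos rfl, zero_sub] at t1
  rw [if_pos rfl, if_neg (Ne.symm hmz), sub_zero] at t2
  have t1' : e N 0 0 * e N (idxN N) 0 = e N (idxN N) 0 * e N 0 0 - e N (idxN N) 0 := by
    rw [sub_eq_iff_eq_add.mp t1]; abel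
  have t2' : e N (idxN N) (idxN N) * e N (idxN N) 0
      = e N (idxN N) 0 * e N (idxN N) (idxN N) + e N (idxN N) 0 :=
    sub_eq_iff_eq_add'.mp t2
  unfold h1N eN1
  rw [sub_mul, mul_sub, t1', t2']
  module

lemma h_pow (hN : 2 ≤ N) (k : ℕ) :
    h1N N * e1N N ^ k = e1N N ^ k * h1N N + (2*(k:ℂ)) • e1N N ^ k := by
  induction k with
  | zero => simp
  | succ j ih =>
    push_cast
    calc h1N N * e1N N ^ (j+1) = (h1N N * e1N N ^ j) * e1N N := by
          rw [pow_succ, mul_assoc]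
      _ = (e1N N ^ j * h1N N + (2*(j:ℂ)) • e1N N ^ j) * e1N N := by rw [ih]
      _ = e1N N ^ j * (h1N N * e1N N) + (2*(j:ℂ)) • (e1N N ^ j * e1N N) := by
          simp only [add_mul, smul_mul_assoc, mul_assoc]
      _ = e1N N ^ j * (e1N N * h1N N + (2:ℂ) • e1N N) + (2*(j:ℂ)) • (e1N N ^ j * e1N N) := by
          rw [h_mul_a hN]
      _ = e1N N ^ (j+1) * h1N N + (2*((j:ℂ)+1)) • e1N N ^ (j+1) := by
          simp only [pow_succ, mul_add, mul_smul_comm, mul_assoc]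
          module

lemma pow_succ_f (hN : 2 ≤ N) (j : ℕ) :
    e1N N ^ (j+1) * eN1 N = eN1 N * e1N N ^ (j+1)
      + ((j:ℂ)+1) • (e1N N ^ j * h1N N) + (((j:ℂ)+1)*(j:ℂ)) • e1N N ^ j := by
  induction j with
  | zero => simp [a_mul_f hN]
  | succ j ih =>
    push_cast
    calc e1N N ^ (j+1+1) * eN1 N = e1N N * (e1N N ^ (j+1) * eN1 N) := by
          rw [pow_succ', mul_assoc]
      _ = e1N N * (eN1 N * e1N N ^ (j+1)
            + ((j:ℂ)+1) • (e1N N ^ j * h1N N) + (((j:ℂ)+1)*(j:ℂ)) • e1N N ^ j) := by rw [ih]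
      _ = (e1N N * eN1 N) * e1N N ^ (j+1)
            + ((j:ℂ)+1) • (e1N N ^ (j+1) * h1N N) + (((j:ℂ)+1)*(j:ℂ)) • e1N N ^ (j+1) := by
          simp only [mul_add, mul_smul_comm, pow_succ', mul_assoc]
      _ = (eN1 N * e1N N + h1N N) * e1N N ^ (j+1)
            + ((j:ℂ)+1) • (e1N N ^ (j+1) * h1N N) + (((j:ℂ)+1)*(j:ℂ)) • e1N N ^ (j+1) := by
          rw [a_mul_f hN]
      _ = eN1 N * e1N N ^ (j+1+1) + h1N N * e1N N ^ (j+1)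
            + ((j:ℂ)+1) • (e1N N ^ (j+1) * h1N N) + (((j:ℂ)+1)*(j:ℂ)) • e1N N ^ (j+1) := by
          simp only [add_mul, pow_succ', mul_assoc]
      _ = eN1 N * e1N N ^ (j+1+1)
            + (e1N N ^ (j+1) * h1N N + (2*((j:ℂ)+1)) • e1N N ^ (j+1))
            + ((j:ℂ)+1) • (e1N N ^ (j+1) * h1N N) + (((j:ℂ)+1)*(j:ℂ)) • e1N N ^ (j+1) := by
          rw [h_pow hN (j+1)]
          push_cast
          module
      _ = eN1 N * e1N N ^ (j+1+1)
            + ((j:ℂ)+1+1) • (e1N N ^ (j+1) * h1N N)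
            + (((j:ℂ)+1+1)*((j:ℂ)+1)) • e1N N ^ (j+1) := by
          module

lemma pow_f (hN : 2 ≤ N) (k : ℕ) :
    e1N N ^ k * eN1 N = eN1 N * e1N N ^ k
      + (k:ℂ) • (e1N N ^ (k-1) * h1N N) + ((k:ℂ)*((k:ℂ)-1)) • e1N N ^ (k-1) := by
  rcases k with _ | j
  · simp
  · have := pow_succ_f hN j
    rw [this]
    have e1 : j + 1 - 1 = j := by omega
    rw [e1]
    push_cast
    module

end ULevel

/-! ### Scalar sequences -/


def scc (m : ℕ) : ℂ := if m % 2 = 0 then cHalf (m / 2) else 0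
def dd (j : ℕ) : ℕ → ℂ := fun m => if m = j then 1 else 0
def cv (c d : ℕ → ℂ) : ℕ → ℂ := fun n => ∑ p ∈ Finset.HasAntidiagonal.antidiagonal n, c p.1 * d p.2

lemma cHalf_zero : cHalf 0 = 1 := by simp [cHalf]

lemma cHalf_succ (r : ℕ) : ((r : ℂ) + 1) * cHalf (r + 1) = ((1:ℂ)/2 - r) * cHalf r := by
  have h1 : ((r.factorial : ℕ) : ℂ) ≠ 0 := Nat.cast_ne_zero.mpr r.factorial_ne_zero
  have h2 : ((r : ℂ) + 1) ≠ 0 := by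
    have : (((r+1 : ℕ)) : ℂ) ≠ 0 := Nat.cast_ne_zero.mpr (Nat.succ_ne_zero r)
    push_cast at this; exact this
  unfold cHalf
  rw [Finset.prod_range_succ, Nat.factorial_succ]
  push_cast
  field_simp

lemma scc_zero : scc 0 = 1 := by simp [scc, cHalf_zero]
lemma scc_one : scc 1 = 0 := by norm_num [scc]

lemma scc_even (r : ℕ) : scc (2*r) = cHalf r := by
  have h1 : (2*r) % 2 = 0 := by omega
  have h2 : (2*r) / 2 = r := by omega
  simp [scc, h1, h2]

lemma scc_odd (r : ℕ) : scc (2*r+1) = 0 := by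
  have h1 : (2*r+1) % 2 = 1 := by omega
  simp [scc, h1]

lemma sc_rec (n : ℕ) : (n : ℂ) * scc n = if 2 ≤ n then ((3:ℂ) - n) * scc (n - 2) else 0 := by
  rcases Nat.even_or_odd n with ⟨r, hr⟩ | ⟨r, rfl⟩
  · have hn : n = 2*r := by omega
    subst hn
    rcases r with _ | s
    · simp
    · rw [if_pos (by omega : 2 ≤ 2*(s+1))]
      rw [show 2*(s+1) - 2 = 2*s by omega]
      rw [scc_even, scc_even]
      have := cHalf_succ s
      push_cast
      linear_combination 2 * this
  · rcases r with _ | s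
    · simp [scc_one]
    · rw [show 2*(s+1)+1 - 2 = 2*s+1 by omega, scc_odd, scc_odd]
      simp

lemma cv_comm (c d : ℕ → ℂ) : cv c d = cv d c := by
  funext n
  unfold cv
  conv_lhs => rw [← Finset.HasAntidiagonal.map_swap_antidiagonal, Finset.sum_map]
  exact Finset.sum_congr rfl fun p _ => by simp [mul_comm]

lemma cv_dd_left (j : ℕ) (c : ℕ → ℂ) (n : ℕ) :
    cv (dd j) c n = if j ≤ n then c (n - j) else 0 := by
  unfold cv dd
  rw [Finset.Nat.sum_antidiagonal_eq_sum_range_succ_mk]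
  simp only [ite_mul, one_mul, zero_mul]
  rw [Finset.sum_ite_eq' (Finset.range (n+1)) j fun k => c (n-k)]
  simp [Nat.lt_succ_iff]

lemma cv_dd_right (j : ℕ) (c : ℕ → ℂ) (n : ℕ) :
    cv c (dd j) n = if j ≤ n then c (n - j) else 0 := by
  rw [cv_comm]; exact cv_dd_left j c n

lemma cv_add_right (c d e : ℕ → ℂ) (n : ℕ) :
    cv c (fun m => d m + e m) n = cv c d n + cv c e n := by
  unfold cv; rw [← Finset.sum_add_distrib]
  exact Finset.sum_congr rfl fun p _ => by ring

lemma cv_sub_right (c d e : ℕ → ℂ) (n : ℕ) :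
    cv c (fun m => d m - e m) n = cv c d n - cv c e n := by
  unfold cv; rw [← Finset.sum_sub_distrib]
  exact Finset.sum_congr rfl fun p _ => by ring

lemma cv_add_left (c d e : ℕ → ℂ) (n : ℕ) :
    cv (fun m => c m + d m) e n = cv c e n + cv d e n := by
  unfold cv; rw [← Finset.sum_add_distrib]
  exact Finset.sum_congr rfl fun p _ => by ring

lemma cv_sub_left (c d e : ℕ → ℂ) (n : ℕ) :
    cv (fun m => c m - d m) e n = cv c e n - cv d e n := by
  unfold cv; rw [← Finset.sum_sub_distrib]
  exact Finset.sum_congr rfl fun p _ => by ring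

lemma cv_smul_right (z : ℂ) (c d : ℕ → ℂ) (n : ℕ) :
    cv c (fun m => z * d m) n = z * cv c d n := by
  unfold cv; rw [Finset.mul_sum]
  exact Finset.sum_congr rfl fun p _ => by ring

lemma cv_smul_left (z : ℂ) (c d : ℕ → ℂ) (n : ℕ) :
    cv (fun m => z * c m) d n = z * cv c d n := by
  unfold cv; rw [Finset.mul_sum]
  exact Finset.sum_congr rfl fun p _ => by ring

lemma step_G (n : ℕ) :
    cv scc (fun m => (m:ℂ) * scc m) n
      = if 2 ≤ n then cv scc scc (n-2) - cv scc (fun m => (m:ℂ) * scc m) (n-2) else 0 := by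
  by_cases hn : 2 ≤ n
  · obtain ⟨m, rfl⟩ : ∃ m, n = m + 2 := ⟨n - 2, by omega⟩
    rw [if_pos hn]
    have hm2 : m + 2 - 2 = m := by omega
    rw [hm2]
    unfold cv
    rw [Finset.Nat.sum_antidiagonal_eq_sum_range_succ_mk,
        Finset.Nat.sum_antidiagonal_eq_sum_range_succ_mk,
        Finset.Nat.sum_antidiagonal_eq_sum_range_succ_mk]
    dsimp only
    rw [show (m+2).succ = (m+1) + 1 + 1 from rfl]
    rw [Finset.sum_range_succ, Finset.sum_range_succ]
    have e1 : m + 2 - (m+1+1) = 0 := by omega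
    have e2 : m + 2 - (m+1) = 1 := by omega
    rw [e1, e2]
    simp only [Nat.cast_zero, zero_mul, mul_zero, add_zero, scc_one, Nat.cast_one, one_mul]
    rw [← Finset.sum_sub_distrib]
    refine Finset.sum_congr rfl fun k hk => ?_
    have hk' : k ≤ m := by simpa [Nat.lt_succ_iff] using hk
    have h2 : 2 ≤ m + 2 - k := by omega
    have h3 : m + 2 - k - 2 = m - k := by omega
    rw [sc_rec (m+2-k), if_pos h2, h3]
    have c1 : ((m + 2 - k : ℕ) : ℂ) = (m:ℂ) + 2 - k := by
      push_cast [Nat.cast_sub (by omega : k ≤ m + 2)]; ring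
    have c2 : ((m - k : ℕ) : ℂ) = (m:ℂ) - k := by
      push_cast [Nat.cast_sub hk']; ring
    rw [c1, c2]
    ring
  · rw [if_neg hn]
    interval_cases n
    · simp [cv]
    · unfold cv
      rw [Finset.Nat.sum_antidiagonal_eq_sum_range_succ_mk]
      simp [Finset.sum_range_succ, scc_one]

lemma V12 : ∀ n : ℕ, cv scc scc n = dd 0 n + dd 2 n ∧
    cv scc (fun m => (m:ℂ) * scc m) n = dd 2 n := by
  intro n
  induction n using Nat.strong_induction_on with
  | _ n ih =>
    have hG : cv scc (fun m => (m:ℂ)*scc m) n = dd 2 n := by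
      rw [step_G]
      by_cases hn : 2 ≤ n
      · obtain ⟨m, rfl⟩ : ∃ m, n = m + 2 := ⟨n - 2, by omega⟩
        rw [if_pos hn]
        have hm2 : m + 2 - 2 = m := by omega
        rw [hm2, (ih m (by omega)).1, (ih m (by omega)).2]
        rw [show dd 2 (m+2) = dd 0 m by
          unfold dd
          rcases eq_or_ne m 0 with rfl | h
          · simp
          · rw [if_neg h, if_neg (by omega)]]
        ring
      · rw [if_neg hn]
        unfold dd
        rw [if_neg (by omega)]
    refine ⟨?_, hG⟩
    rcases Nat.eq_zero_or_pos n with rfl | hpos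
    · simp [cv, dd, scc_zero]
    · have key : (n:ℂ) * cv scc scc n = 2 * cv scc (fun m => (m:ℂ)*scc m) n := by
        have swap : cv (fun m => (m:ℂ)*scc m) scc n = cv scc (fun m => (m:ℂ)*scc m) n := by
          rw [cv_comm]
        have expand : (n:ℂ) * cv scc scc n
            = cv (fun m => (m:ℂ)*scc m) scc n + cv scc (fun m => (m:ℂ)*scc m) n := by
          unfold cv
          rw [Finset.mul_sum, ← Finset.sum_add_distrib]
          refine Finset.sum_congr rfl fun p hp => ?_
          have hm := Finset.HasAntidiagonal.mem_antidiagonal.mp hp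
          have hc : ((p.1 : ℂ) + p.2) = n := by exact_mod_cast congrArg (Nat.cast (R := ℂ)) hm
          dsimp only
          linear_combination (-(scc p.1 * scc p.2)) * hc
        rw [expand, swap]; ring
      rw [hG] at key
      by_cases h2 : n = 2
      · subst h2
        have h1 : dd 2 2 = 1 := by simp [dd]
        rw [h1] at key
        have : cv scc scc 2 = 1 := by linear_combination key / 2
        rw [this]; simp [dd]
      · have hdd : dd 2 n = 0 := by simp [dd, h2]
        rw [hdd, mul_zero] at key
        have hne : (n:ℂ) ≠ 0 := Nat.cast_ne_zero.mpr (by omega)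
        have : cv scc scc n = 0 := by
          rcases mul_eq_zero.mp key with h | h
          · exact absurd h hne
          · exact h
        rw [this]
        unfold dd
        rw [if_neg (by omega : ¬ n = 0), if_neg h2]
        ring

lemma V1 (n : ℕ) : cv scc scc n = dd 0 n + dd 2 n := (V12 n).1
lemma V2 (n : ℕ) : cv scc (fun m => (m:ℂ) * scc m) n = dd 2 n := (V12 n).2

lemma A1 (n : ℕ) : (n:ℂ) * scc n + (if 2 ≤ n then ((n:ℂ)-2) * scc (n-2) else 0)
    = if 2 ≤ n then scc (n-2) else 0 := by
  rw [sc_rec]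
  split_ifs with h
  · ring
  · simp

lemma A2 (n : ℕ) : (n:ℂ)*((n:ℂ)-1) * scc n + (if 2 ≤ n then ((n:ℂ)-2)^2 * scc (n-2) else 0)
    = if 2 ≤ n then scc (n-2) else 0 := by
  have h' := congrArg (fun z => ((n:ℂ)-1) * z) (sc_rec n)
  by_cases h : 2 ≤ n
  · rw [if_pos h] at h'
    rw [if_pos h, if_pos h]
    linear_combination h'
  · rw [if_neg h] at h'
    rw [if_neg h, if_neg h]
    linear_combination h'

/-! ### Power series toolkit -/

section Series
variable (N : ℕ)

def w (d : ℕ) (c : ℕ → ℂ) : PowerSeries (U N) :=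
  PowerSeries.mk fun m => c m • (e1N N ^ (m - d))

lemma w_zero (d : ℕ) : (0 : PowerSeries (U N)) = w N d (fun _ => 0) := by
  ext n
  simp [w]

lemma w_congr {d : ℕ} {c c' : ℕ → ℂ} (h : ∀ m, c m = c' m) : w N d c = w N d c' :=
  congrArg (w N d) (funext h)

lemma w_add (d : ℕ) (c c' : ℕ → ℂ) :
    w N d c + w N d c' = w N d (fun m => c m + c' m) := by
  ext n
  simp [w, add_smul]

lemma w_sub (d : ℕ) (c c' : ℕ → ℂ) :
    w N d c - w N d c' = w N d (fun m => c m - c' m) := by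
  ext n
  simp only [map_sub, w, PowerSeries.coeff_mk]
  module

lemma w_smul (d : ℕ) (z : ℂ) (c : ℕ → ℂ) :
    z • w N d c = w N d (fun m => z * c m) := by
  ext n
  simp [w, smul_smul]

lemma one_w : (1 : PowerSeries (U N)) = w N 0 (dd 0) := by
  ext n
  simp only [PowerSeries.coeff_one, w, PowerSeries.coeff_mk, dd]
  split_ifs with h
  · subst h; simp
  · simp

lemma s_w : s N = w N 0 scc := by
  ext n
  simp only [s, PowerSeries.coeff_mk, w, scc]
  split_ifs <;> simp

lemma w_mul (d e : ℕ) (c c' : ℕ → ℂ) (hc : ∀ m, m < d → c m = 0)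
    (hc' : ∀ m, m < e → c' m = 0) :
    w N d c * w N e c' = w N (d+e) (cv c c') := by
  ext n
  rw [PowerSeries.coeff_mul]
  simp only [w, PowerSeries.coeff_mk]
  rw [show (cv c c' n • e1N N ^ (n - (d+e)))
      = ∑ p ∈ Finset.HasAntidiagonal.antidiagonal n, (c p.1 * c' p.2) • e1N N ^ (n - (d+e)) by
    rw [cv, Finset.sum_smul]]
  refine Finset.sum_congr rfl fun p hp => ?_
  have hpn := Finset.HasAntidiagonal.mem_antidiagonal.mp hp
  by_cases h1 : c p.1 = 0
  · simp [h1]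
  by_cases h2 : c' p.2 = 0
  · simp [h2]
  have hd : d ≤ p.1 := by by_contra hcon; exact h1 (hc _ (by omega))
  have he : e ≤ p.2 := by by_contra hcon; exact h2 (hc' _ (by omega))
  rw [smul_mul_smul_comm, ← pow_add]
  congr 2
  omega

lemma w_mul00 (c c' : ℕ → ℂ) : w N 0 c * w N 0 c' = w N 0 (cv c c') := by
  have h := w_mul N 0 0 c c' (fun m hm => absurd hm (Nat.not_lt_zero m))
    (fun m hm => absurd hm (Nat.not_lt_zero m))
  rwa [show (0+0 : ℕ) = 0 from rfl] at h

lemma w_mul01 (c c' : ℕ → ℂ) (h : c' 0 = 0) : w N 0 c * w N 1 c' = w N 1 (cv c c') := by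
  have h2 := w_mul N 0 1 c c' (fun m hm => absurd hm (Nat.not_lt_zero m))
    (fun m hm => by have hm0 : m = 0 := by omega
                    rw [hm0]; exact h)
  rwa [show (0+1 : ℕ) = 1 from rfl] at h2

lemma w_mul10 (c c' : ℕ → ℂ) (h : c 0 = 0) : w N 1 c * w N 0 c' = w N 1 (cv c c') := by
  have h2 := w_mul N 1 0 c c'
    (fun m hm => by have hm0 : m = 0 := by omega
                    rw [hm0]; exact h)
    (fun m hm => absurd hm (Nat.not_lt_zero m))
  rwa [show (1+0 : ℕ) = 1 from rfl] at h2

lemma C_mul_w (u : U N) (d : ℕ) (c : ℕ → ℂ) :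
    C N u * w N d c = PowerSeries.mk (fun n => c n • (u * e1N N ^ (n-d))) := by
  ext n
  simp only [C, w, PowerSeries.coeff_C_mul, PowerSeries.coeff_mk, mul_smul_comm]

lemma w_mul_C (u : U N) (d : ℕ) (c : ℕ → ℂ) :
    w N d c * C N u = PowerSeries.mk (fun n => c n • (e1N N ^ (n-d) * u)) := by
  ext n
  simp only [C, w, PowerSeries.coeff_mul_C, PowerSeries.coeff_mk, smul_mul_assoc]

lemma C_smul (z : ℂ) (u : U N) : C N (z • u) = z • C N u := by
  ext n
  simp only [C, PowerSeries.coeff_smul, PowerSeries.coeff_C]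
  split_ifs <;> simp

lemma tv_pow_C (k : ℕ) (u : U N) :
    tv N ^ k * C N u = PowerSeries.mk (fun m => if m = k then u else 0) := by
  ext n
  rw [tv, C, PowerSeries.coeff_mul]
  simp only [PowerSeries.coeff_X_pow, PowerSeries.coeff_C, PowerSeries.coeff_mk]
  rw [Finset.Nat.sum_antidiagonal_eq_sum_range_succ_mk]
  simp only [ite_mul, one_mul, zero_mul]
  rw [Finset.sum_ite_eq' (Finset.range (n+1)) k
    (fun i => if n - i = 0 then u else 0)]
  rcases eq_or_ne n k with rfl | hne
  · rw [if_pos (by simp [Nat.lt_succ_iff]), if_pos (by omega), if_pos rfl]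
  · rw [if_neg hne]
    simp only [Finset.mem_range]
    split_ifs with h1 h2
    · exfalso; omega
    · rfl
    · rfl

lemma A_w : tv N * C N (e1N N) = w N 0 (dd 1) := by
  have h := tv_pow_C N 1 (e1N N)
  rw [pow_one] at h
  rw [h]
  ext n
  simp only [PowerSeries.coeff_mk, w, dd]
  rcases eq_or_ne n 1 with rfl | h1
  · simp
  · simp [h1]

lemma B_w : tv N ^ 2 * C N (e1N N) = w N 1 (dd 2) := by
  rw [tv_pow_C N 2 (e1N N)]
  ext n
  simp only [PowerSeries.coeff_mk, w, dd]
  rcases eq_or_ne n 2 with rfl | h1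
  · simp [pow_one]
  · simp [h1]

lemma Hc_w (hN : 2 ≤ N) (d : ℕ) (c : ℕ → ℂ) :
    C N (h1N N) * w N d c = w N d c * C N (h1N N)
      + w N d (fun m => 2*((m-d : ℕ):ℂ) * c m) := by
  rw [C_mul_w, w_mul_C]
  ext n
  simp only [map_add, PowerSeries.coeff_mk, w]
  rw [h_pow hN (n-d)]
  module

lemma Hc_w0 (hN : 2 ≤ N) (c : ℕ → ℂ) :
    C N (h1N N) * w N 0 c = w N 0 c * C N (h1N N)
      + w N 0 (fun m => 2*(m:ℂ) * c m) := by
  rw [Hc_w N hN 0 c]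
  congr 1

lemma Hc_w1 (hN : 2 ≤ N) (c : ℕ → ℂ) :
    C N (h1N N) * w N 1 c = w N 1 c * C N (h1N N)
      + w N 1 (fun m => 2*((m-1 : ℕ):ℂ) * c m) :=
  Hc_w N hN 1 c

lemma w_F0 (hN : 2 ≤ N) (c : ℕ → ℂ) :
    w N 0 c * C N (eN1 N) = C N (eN1 N) * w N 0 c
      + w N 1 (fun m => (m:ℂ) * c m) * C N (h1N N)
      + w N 1 (fun m => (m:ℂ) * ((m:ℂ) - 1) * c m) := by
  rw [w_mul_C, C_mul_w, w_mul_C]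
  ext n
  simp only [map_add, PowerSeries.coeff_mk, w, Nat.sub_zero]
  try rw [pow_f hN n]
  try module

lemma Hc_F (hN : 2 ≤ N) : C N (h1N N) * C N (eN1 N)
    = C N (eN1 N) * C N (h1N N) - (2:ℂ) • C N (eN1 N) := by
  rw [← map_mul, h_mul_f hN, map_sub, map_mul, C_smul]

def tcc : ℕ → ℂ := fun m => dd 1 m + scc m
def tcc' : ℕ → ℂ := fun m => scc m - dd 1 m
def qq : ℕ → ℂ := fun m => (1/4 : ℂ) * dd 2 m

lemma qq0 : qq 0 = 0 := by simp [qq, dd]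

lemma T_w : T N = w N 0 tcc := by
  rw [T, A_w, s_w, w_add]
  rfl

lemma T'_w : T' N = w N 0 tcc' := by
  rw [T', A_w, s_w]
  have hneg : -(w N 0 (dd 1)) = (-1 : ℂ) • w N 0 (dd 1) := (neg_one_smul ℂ _).symm
  rw [hneg, w_smul, w_add]
  exact w_congr N fun m => by simp [tcc']; ring

lemma H_w : H N = w N 0 scc * C N (h1N N) := by
  rw [H, s_w]

lemma E_w : E N = C N (eN1 N) + w N 1 qq - w N 1 qq * C N (h1N N) * C N (h1N N) := by
  rw [E]
  have h1 : e1N N * (h1N N ^ 2 - 1) = e1N N * (h1N N * h1N N) - e1N N := by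
    rw [pow_two, mul_sub, mul_one]
  rw [h1, map_sub, map_mul, map_mul]
  have h2 : tv N ^ 2 * (C N (e1N N) * (C N (h1N N) * C N (h1N N)) - C N (e1N N))
      = w N 1 (dd 2) * C N (h1N N) * C N (h1N N) - w N 1 (dd 2) := by
    rw [mul_sub, ← mul_assoc, ← mul_assoc, B_w, mul_assoc]
  rw [h2, smul_sub]
  have h3 : ((1:ℂ)/4) • (w N 1 (dd 2) * C N (h1N N) * C N (h1N N))
      = w N 1 qq * C N (h1N N) * C N (h1N N) := by
    rw [← smul_mul_assoc, ← smul_mul_assoc, w_smul]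
    rfl
  have h4 : ((1:ℂ)/4) • (w N 1 (dd 2)) = w N 1 qq := by
    rw [w_smul]; rfl
  rw [h3, h4]
  abel

end Series

/-! ### Scalar expansion helpers -/

lemma cv_congr_r (c : ℕ → ℂ) {d d' : ℕ → ℂ} (h : ∀ m, d m = d' m) (n : ℕ) :
    cv c d n = cv c d' n := by
  unfold cv; exact Finset.sum_congr rfl fun p _ => by rw [h]

lemma cv_congr_l {c c' : ℕ → ℂ} (d : ℕ → ℂ) (h : ∀ m, c m = c' m) (n : ℕ) :
    cv c d n = cv c' d n := by
  unfold cv; exact Finset.sum_congr rfl fun p _ => by rw [h]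

lemma cv_tcc_r (c : ℕ → ℂ) (n : ℕ) :
    cv c tcc n = (if 1 ≤ n then c (n-1) else 0) + cv c scc n := by
  have h : cv c tcc n = cv c (fun m => dd 1 m + scc m) n := rfl
  rw [h, cv_add_right, cv_dd_right]

lemma cv_tcc_l (c : ℕ → ℂ) (n : ℕ) :
    cv tcc c n = (if 1 ≤ n then c (n-1) else 0) + cv scc c n := by
  have h : cv tcc c n = cv (fun m => dd 1 m + scc m) c n := rfl
  rw [h, cv_add_left, cv_dd_left]

lemma cv_tcc'_r (c : ℕ → ℂ) (n : ℕ) :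
    cv c tcc' n = cv c scc n - (if 1 ≤ n then c (n-1) else 0) := by
  have h : cv c tcc' n = cv c (fun m => scc m - dd 1 m) n := rfl
  rw [h, cv_sub_right, cv_dd_right]

lemma cv_tcc'_l (c : ℕ → ℂ) (n : ℕ) :
    cv tcc' c n = cv scc c n - (if 1 ≤ n then c (n-1) else 0) := by
  have h : cv tcc' c n = cv (fun m => scc m - dd 1 m) c n := rfl
  rw [h, cv_sub_left, cv_dd_left]

lemma cv_qq_l (c : ℕ → ℂ) (n : ℕ) :
    cv qq c n = (1/4 : ℂ) * (if 2 ≤ n then c (n-2) else 0) := by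
  have h : cv qq c n = cv (fun m => (1/4:ℂ) * dd 2 m) c n := rfl
  rw [h, cv_smul_left, cv_dd_left]

lemma cv_qq_r (c : ℕ → ℂ) (n : ℕ) :
    cv c qq n = (1/4 : ℂ) * (if 2 ≤ n then c (n-2) else 0) := by
  rw [cv_comm]; exact cv_qq_l c n

lemma cv_scc_dtcc (n : ℕ) :
    cv scc (fun m => 2*(m:ℂ)*tcc m) n
      = 2*(if 1 ≤ n then scc (n-1) else 0) + 2*dd 2 n := by
  rw [cv_congr_r scc (d' := fun m => 2*dd 1 m + 2*((m:ℂ)*scc m))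
    (fun m => by
      simp only [tcc, dd]
      split_ifs with h
      · subst h; push_cast; ring
      · ring) n]
  rw [cv_add_right, cv_smul_right, cv_smul_right, cv_dd_right, V2]

lemma cv_scc_dtcc' (n : ℕ) :
    cv scc (fun m => 2*(m:ℂ)*tcc' m) n
      = 2*dd 2 n - 2*(if 1 ≤ n then scc (n-1) else 0) := by
  rw [cv_congr_r scc (d' := fun m => 2*((m:ℂ)*scc m) - 2*dd 1 m)
    (fun m => by
      simp only [tcc', dd]
      split_ifs with h
      · subst h; push_cast; ring
      · ring) n]
  rw [cv_sub_right, cv_smul_right, cv_smul_right, cv_dd_right, V2]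

/-! ### Relations 1–4 -/

section Rels
variable (N : ℕ)

lemma rel1 : T N * T' N = 1 := by
  rw [T_w, T'_w, w_mul00, one_w]
  refine w_congr N fun n => ?_
  rw [cv_tcc_l tcc' n, cv_tcc'_r scc n, V1 n]
  simp only [tcc', dd]
  split_ifs <;> first | (exfalso; omega) | ring

lemma rel2 : T' N * T N = 1 := by
  rw [T_w, T'_w, w_mul00, one_w]
  refine w_congr N fun n => ?_
  rw [cv_tcc'_l tcc n, cv_tcc_r scc n, V1 n]
  simp only [tcc, dd]
  split_ifs <;> first | (exfalso; omega) | ring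

lemma rel3 (hN : 2 ≤ N) : br (H N) (T N) = T N ^ 2 - 1 := by
  have h1 : H N * T N = w N 0 (cv scc tcc) * C N (h1N N)
      + w N 0 (cv scc (fun m => 2*(m:ℂ)*tcc m)) := by
    rw [H_w, T_w, mul_assoc, Hc_w0 N hN tcc, mul_add, ← mul_assoc, w_mul00, w_mul00]
  have h2 : T N * H N = w N 0 (cv tcc scc) * C N (h1N N) := by
    rw [T_w, H_w, ← mul_assoc, w_mul00]
  have h3 : T N ^ 2 - 1 = w N 0 (fun m => cv tcc tcc m - dd 0 m) := by
    rw [pow_two, T_w, w_mul00, one_w, w_sub]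
  rw [br, h1, h2, h3, cv_comm scc tcc, add_sub_cancel_left]
  refine w_congr N fun n => ?_
  rw [cv_scc_dtcc n, cv_tcc_l tcc n, cv_tcc_r scc n, V1 n]
  simp only [tcc, dd]
  split_ifs <;> first | (exfalso; omega) | ring

lemma rel4 (hN : 2 ≤ N) : br (H N) (T' N) = T' N ^ 2 - 1 := by
  have h1 : H N * T' N = w N 0 (cv scc tcc') * C N (h1N N)
      + w N 0 (cv scc (fun m => 2*(m:ℂ)*tcc' m)) := by
    rw [H_w, T'_w, mul_assoc, Hc_w0 N hN tcc', mul_add, ← mul_assoc, w_mul00, w_mul00]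
  have h2 : T' N * H N = w N 0 (cv tcc' scc) * C N (h1N N) := by
    rw [T'_w, H_w, ← mul_assoc, w_mul00]
  have h3 : T' N ^ 2 - 1 = w N 0 (fun m => cv tcc' tcc' m - dd 0 m) := by
    rw [pow_two, T'_w, w_mul00, one_w, w_sub]
  rw [br, h1, h2, h3, cv_comm scc tcc', add_sub_cancel_left]
  refine w_congr N fun n => ?_
  rw [cv_scc_dtcc' n, cv_tcc'_l tcc' n, cv_tcc'_r scc n, V1 n]
  simp only [tcc', dd]
  split_ifs <;> first | (exfalso; omega) | ring

end Rels

/-! ### Push rules for normalization -/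

section Push
variable (N : ℕ)

lemma cv_zero_l (c d : ℕ → ℂ) (h : c 0 = 0) : cv c d 0 = 0 := by
  simp [cv, h]

lemma tv_w : tv N = w N 1 (dd 1) := by
  ext n
  simp only [tv, PowerSeries.coeff_X, w, PowerSeries.coeff_mk, dd]
  rcases eq_or_ne n 1 with rfl | h
  · simp
  · simp [h]

lemma RS (z : ℂ) (d : ℕ) (c : ℕ → ℂ) (X : PowerSeries (U N)) :
    z • (w N d c * X) = w N d (fun m => z * c m) * X := by
  rw [← smul_mul_assoc, w_smul]

lemma RSe (z : ℂ) (d : ℕ) (c : ℕ → ℂ) :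
    z • w N d c = w N d (fun m => z * c m) := w_smul N d z c

lemma R1 (hN : 2 ≤ N) (c : ℕ → ℂ) (X : PowerSeries (U N)) :
    C N (h1N N) * (w N 0 c * X)
      = w N 0 c * (C N (h1N N) * X) + w N 0 (fun m => 2*(m:ℂ)*c m) * X := by
  rw [← mul_assoc, Hc_w0 N hN c, add_mul, mul_assoc]

lemma R1e (hN : 2 ≤ N) (c : ℕ → ℂ) :
    C N (h1N N) * w N 0 c
      = w N 0 c * C N (h1N N) + w N 0 (fun m => 2*(m:ℂ)*c m) := Hc_w0 N hN c

lemma R1' (hN : 2 ≤ N) (c : ℕ → ℂ) (X : PowerSeries (U N)) :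
    C N (h1N N) * (w N 1 c * X)
      = w N 1 c * (C N (h1N N) * X) + w N 1 (fun m => 2*((m-1 : ℕ):ℂ)*c m) * X := by
  rw [← mul_assoc, Hc_w1 N hN c, add_mul, mul_assoc]

lemma R1'e (hN : 2 ≤ N) (c : ℕ → ℂ) :
    C N (h1N N) * w N 1 c
      = w N 1 c * C N (h1N N) + w N 1 (fun m => 2*((m-1 : ℕ):ℂ)*c m) := Hc_w1 N hN c

lemma R3 (hN : 2 ≤ N) (X : PowerSeries (U N)) :
    C N (h1N N) * (C N (eN1 N) * X)
      = C N (eN1 N) * (C N (h1N N) * X) - (2:ℂ) • (C N (eN1 N) * X) := by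
  rw [← mul_assoc, Hc_F N hN, sub_mul, mul_assoc, smul_mul_assoc]

lemma R3e (hN : 2 ≤ N) :
    C N (h1N N) * C N (eN1 N)
      = C N (eN1 N) * C N (h1N N) - (2:ℂ) • C N (eN1 N) := Hc_F N hN

lemma R2 (hN : 2 ≤ N) (c : ℕ → ℂ) (X : PowerSeries (U N)) :
    w N 0 c * (C N (eN1 N) * X)
      = C N (eN1 N) * (w N 0 c * X)
        + w N 1 (fun m => (m:ℂ) * c m) * (C N (h1N N) * X)
        + w N 1 (fun m => (m:ℂ) * ((m:ℂ) - 1) * c m) * X := by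
  rw [← mul_assoc, w_F0 N hN c]
  simp only [add_mul, mul_assoc]

lemma R2e (hN : 2 ≤ N) (c : ℕ → ℂ) :
    w N 0 c * C N (eN1 N)
      = C N (eN1 N) * w N 0 c
        + w N 1 (fun m => (m:ℂ) * c m) * C N (h1N N)
        + w N 1 (fun m => (m:ℂ) * ((m:ℂ) - 1) * c m) := w_F0 N hN c

lemma R4 (c c' : ℕ → ℂ) (X : PowerSeries (U N)) :
    w N 0 c * (w N 0 c' * X) = w N 0 (cv c c') * X := by
  rw [← mul_assoc, w_mul00]

lemma R4e (c c' : ℕ → ℂ) : w N 0 c * w N 0 c' = w N 0 (cv c c') := w_mul00 N c c'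

lemma R5qq (c : ℕ → ℂ) (X : PowerSeries (U N)) :
    w N 0 c * (w N 1 qq * X) = w N 1 (cv c qq) * X := by
  rw [← mul_assoc, w_mul01 N c qq qq0]

lemma R5qqe (c : ℕ → ℂ) : w N 0 c * w N 1 qq = w N 1 (cv c qq) := w_mul01 N c qq qq0

lemma R6qq (c' : ℕ → ℂ) (X : PowerSeries (U N)) :
    w N 1 qq * (w N 0 c' * X) = w N 1 (cv qq c') * X := by
  rw [← mul_assoc, w_mul10 N qq c' qq0]

lemma R6qqe (c' : ℕ → ℂ) : w N 1 qq * w N 0 c' = w N 1 (cv qq c') :=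
  w_mul10 N qq c' qq0

lemma R5dqq (c : ℕ → ℂ) (X : PowerSeries (U N)) :
    w N 0 c * (w N 1 (fun m => 2 * (((m - 1 : ℕ):ℂ) * qq m)) * X)
      = w N 1 (cv c (fun m => 2 * (((m - 1 : ℕ):ℂ) * qq m))) * X := by
  rw [← mul_assoc, w_mul01 N c _ (by simp [qq, dd])]

lemma R5dqqe (c : ℕ → ℂ) :
    w N 0 c * w N 1 (fun m => 2 * (((m - 1 : ℕ):ℂ) * qq m))
      = w N 1 (cv c (fun m => 2 * (((m - 1 : ℕ):ℂ) * qq m))) :=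
  w_mul01 N c _ (by simp [qq, dd])

lemma R6dd1 (c' : ℕ → ℂ) (X : PowerSeries (U N)) :
    w N 1 (dd 1) * (w N 0 c' * X) = w N 1 (cv (dd 1) c') * X := by
  rw [← mul_assoc, w_mul10 N (dd 1) c' (by simp [dd])]

lemma R6dd1e (c' : ℕ → ℂ) : w N 1 (dd 1) * w N 0 c' = w N 1 (cv (dd 1) c') :=
  w_mul10 N (dd 1) c' (by simp [dd])

end Push


/-! ### Scalar identities for relations 5-7 -/

lemma scc_two : scc 2 = 1/2 := by
  norm_num [scc, cHalf, Finset.prod_range_succ]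

lemma scc_three : scc 3 = 0 := scc_odd 1

lemma cv_scc_dtcc₂ (n : ℕ) :
    cv scc (fun m => 2*((m:ℂ)*tcc m)) n
      = 2*(if 1 ≤ n then scc (n-1) else 0) + 2*dd 2 n := by
  rw [cv_congr_r scc (d' := fun m => 2*(m:ℂ)*tcc m) (fun m => by ring) n]
  exact cv_scc_dtcc n

lemma cv_scc_dtcc₂' (n : ℕ) :
    cv scc (fun m => 2*((m:ℂ)*tcc' m)) n
      = 2*dd 2 n - 2*(if 1 ≤ n then scc (n-1) else 0) := by
  rw [cv_congr_r scc (d' := fun m => 2*(m:ℂ)*tcc' m) (fun m => by ring) n]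
  exact cv_scc_dtcc' n

lemma S1 (n : ℕ) : (n:ℂ) * tcc n
    = 1/2 * cv (dd 1) (cv scc tcc) n + 1/2 * cv (dd 1) (cv tcc scc) n
      - cv qq (fun m => 2 * ((m:ℂ) * tcc m)) n
      - cv qq (fun m => 2 * ((m:ℂ) * tcc m)) n := by
  rcases Nat.lt_or_ge n 4 with h | h
  · interval_cases n <;>
      simp only [cv_dd_left, cv_qq_l, cv_tcc_r, cv_tcc_l, V1] <;>
      norm_num [tcc, dd, scc_zero, scc_one, scc_two, scc_three]
  · have h1 : 1 ≤ n := by omega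
    have h2 : 2 ≤ n := by omega
    have h11 : 1 ≤ n - 1 := by omega
    rw [cv_dd_left, cv_dd_left, cv_qq_l, if_pos h1, if_pos h1, if_pos h2,
        cv_tcc_r, cv_tcc_l, if_pos h11, V1]
    have hnn : n - 1 - 1 = n - 2 := by omega
    have hc2 : ((n-2:ℕ):ℂ) = (n:ℂ) - 2 := by
      rw [Nat.cast_sub h2]; norm_num
    rw [hnn, hc2]
    have hA := A1 n
    rw [if_pos h2, if_pos h2] at hA
    simp only [tcc, dd]
    split_ifs <;> first | (exfalso; omega) | linear_combination hA

lemma S2 (n : ℕ) : (n:ℂ) * ((n:ℂ) * tcc n) - (n:ℂ) * (1 * tcc n)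
    = 1/2 * cv (dd 1) (cv scc (fun m => 2 * ((m:ℂ) * tcc m))) n
      - cv qq (fun m => 2 * ((m:ℂ) * (2 * ((m:ℂ) * tcc m)))) n := by
  rcases Nat.lt_or_ge n 4 with h | h
  · interval_cases n <;>
      simp only [cv_dd_left, cv_qq_l, cv_scc_dtcc₂] <;>
      norm_num [tcc, dd, scc_zero, scc_one, scc_two, scc_three]
  · have h1 : 1 ≤ n := by omega
    have h2 : 2 ≤ n := by omega
    have h11 : 1 ≤ n - 1 := by omega
    rw [cv_dd_left, cv_qq_l, if_pos h1, if_pos h2, cv_scc_dtcc₂, if_pos h11]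
    have hnn : n - 1 - 1 = n - 2 := by omega
    have hc2 : ((n-2:ℕ):ℂ) = (n:ℂ) - 2 := by
      rw [Nat.cast_sub h2]; norm_num
    rw [hnn, hc2]
    have hA := A2 n
    rw [if_pos h2, if_pos h2] at hA
    simp only [tcc, dd]
    split_ifs <;> first | (exfalso; omega) | linear_combination hA

lemma S1' (n : ℕ) : (n:ℂ) * tcc' n
    = -(1/2 * cv (dd 1) (cv scc tcc') n) - 1/2 * cv (dd 1) (cv tcc' scc) n
      - cv qq (fun m => 2 * ((m:ℂ) * tcc' m)) n
      - cv qq (fun m => 2 * ((m:ℂ) * tcc' m)) n := by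
  rcases Nat.lt_or_ge n 4 with h | h
  · interval_cases n <;>
      simp only [cv_dd_left, cv_qq_l, cv_tcc'_r, cv_tcc'_l, V1] <;>
      norm_num [tcc', dd, scc_zero, scc_one, scc_two, scc_three]
  · have h1 : 1 ≤ n := by omega
    have h2 : 2 ≤ n := by omega
    have h11 : 1 ≤ n - 1 := by omega
    rw [cv_dd_left, cv_dd_left, cv_qq_l, if_pos h1, if_pos h1, if_pos h2,
        cv_tcc'_r, cv_tcc'_l, if_pos h11, V1]
    have hnn : n - 1 - 1 = n - 2 := by omega
    have hc2 : ((n-2:ℕ):ℂ) = (n:ℂ) - 2 := by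
      rw [Nat.cast_sub h2]; norm_num
    rw [hnn, hc2]
    have hA := A1 n
    rw [if_pos h2, if_pos h2] at hA
    simp only [tcc', dd]
    split_ifs <;> first | (exfalso; omega) | linear_combination hA

lemma S2' (n : ℕ) : (n:ℂ) * ((n:ℂ) * tcc' n) - (n:ℂ) * (1 * tcc' n)
    = -(1/2 * cv (dd 1) (cv scc (fun m => 2 * ((m:ℂ) * tcc' m))) n)
      - cv qq (fun m => 2 * ((m:ℂ) * (2 * ((m:ℂ) * tcc' m)))) n := by
  rcases Nat.lt_or_ge n 4 with h | h
  · interval_cases n <;>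
      simp only [cv_dd_left, cv_qq_l, cv_scc_dtcc₂'] <;>
      norm_num [tcc', dd, scc_zero, scc_one, scc_two, scc_three]
  · have h1 : 1 ≤ n := by omega
    have h2 : 2 ≤ n := by omega
    have h11 : 1 ≤ n - 1 := by omega
    rw [cv_dd_left, cv_qq_l, if_pos h1, if_pos h2, cv_scc_dtcc₂', if_pos h11]
    have hnn : n - 1 - 1 = n - 2 := by omega
    have hc2 : ((n-2:ℕ):ℂ) = (n:ℂ) - 2 := by
      rw [Nat.cast_sub h2]; norm_num
    rw [hnn, hc2]
    have hA := A2 n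
    rw [if_pos h2, if_pos h2] at hA
    simp only [tcc', dd]
    split_ifs <;> first | (exfalso; omega) | linear_combination hA

/-! ### Relations 5 and 6 -/

lemma rel5 (N : ℕ) (hN : 2 ≤ N) :
    br (T N) (E N) = ((1:ℂ)/2) • (tv N * (H N * T N + T N * H N)) := by
  rw [br, T_w, E_w, H_w, tv_w]
  simp only [mul_add, add_mul, mul_sub, sub_mul, mul_assoc, smul_add, smul_sub,
    mul_smul_comm,
    R1 N hN, R1e N hN, R1' N hN, R1'e N hN, R2 N hN, R2e N hN, R3 N hN, R3e N hN,
    R4 N, R4e N, R5qq N, R5qqe N, R6qq N, R6qqe N, R6dd1 N, R6dd1e N, RS N, RSe N]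
  rw [cv_comm tcc qq]
  rw [show (w N 1 fun m => (m:ℂ) * tcc m)
      = w N 1 (fun m => 1/2 * cv (dd 1) (cv scc tcc) m)
        + w N 1 (fun m => 1/2 * cv (dd 1) (cv tcc scc) m)
        - w N 1 (cv qq (fun m => 2 * ((m:ℂ) * tcc m)))
        - w N 1 (cv qq (fun m => 2 * ((m:ℂ) * tcc m))) from by
    rw [w_add, w_sub, w_sub]
    exact w_congr N fun n => S1 n]
  rw [show (w N 1 fun m => (m:ℂ) * ((m:ℂ) * tcc m) - (m:ℂ) * (1 * tcc m))
      = w N 1 (fun m => 1/2 * cv (dd 1) (cv scc (fun k => 2 * ((k:ℂ) * tcc k))) m)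
        - w N 1 (cv qq (fun m => 2 * ((m:ℂ) * (2 * ((m:ℂ) * tcc m))))) from by
    rw [w_sub]
    exact w_congr N fun n => S2 n]
  simp only [add_mul, sub_mul]
  abel

lemma rel6 (N : ℕ) (hN : 2 ≤ N) :
    br (T' N) (E N) = -(((1:ℂ)/2) • (tv N * (H N * T' N + T' N * H N))) := by
  rw [br, T'_w, E_w, H_w, tv_w]
  simp only [mul_add, add_mul, mul_sub, sub_mul, mul_assoc, smul_add, smul_sub,
    mul_smul_comm,
    R1 N hN, R1e N hN, R1' N hN, R1'e N hN, R2 N hN, R2e N hN, R3 N hN, R3e N hN,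
    R4 N, R4e N, R5qq N, R5qqe N, R6qq N, R6qqe N, R6dd1 N, R6dd1e N, RS N, RSe N]
  rw [cv_comm tcc' qq]
  rw [show (w N 1 fun m => (m:ℂ) * tcc' m)
      = (0 : PowerSeries (U N))
        - w N 1 (fun m => 1/2 * cv (dd 1) (cv scc tcc') m)
        - w N 1 (fun m => 1/2 * cv (dd 1) (cv tcc' scc) m)
        - w N 1 (cv qq (fun m => 2 * ((m:ℂ) * tcc' m)))
        - w N 1 (cv qq (fun m => 2 * ((m:ℂ) * tcc' m))) from by
    rw [w_zero N 1, w_sub, w_sub, w_sub, w_sub]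
    exact w_congr N fun n => by
      have hh := S1' n
      rw [hh]
      ring]
  rw [show (w N 1 fun m => (m:ℂ) * ((m:ℂ) * tcc' m) - (m:ℂ) * (1 * tcc' m))
      = (0 : PowerSeries (U N))
        - w N 1 (fun m => 1/2 * cv (dd 1) (cv scc (fun k => 2 * ((k:ℂ) * tcc' k))) m)
        - w N 1 (cv qq (fun m => 2 * ((m:ℂ) * (2 * ((m:ℂ) * tcc' m))))) from by
    rw [w_zero N 1, w_sub, w_sub]
    exact w_congr N fun n => by
      have hh := S2' n
      rw [hh]
      ring]
  simp only [sub_mul, add_mul, zero_mul]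
  abel

lemma CC_eq (N : ℕ) : (C N : U N →+* PowerSeries (U N)) = PowerSeries.C := rfl

lemma co_w (N : ℕ) (d : ℕ) (c : ℕ → ℂ) (n : ℕ) :
    PowerSeries.coeff n (w N d c) = c n • e1N N ^ (n - d) := by
  simp [w]

lemma cv_scc_dqq (n : ℕ) :
    cv scc (fun m => 2 * (((m - 1 : ℕ):ℂ) * qq m)) n
      = 1/2 * (if 2 ≤ n then scc (n-2) else 0) := by
  rw [cv_congr_r scc (d' := fun m => (1/2 : ℂ) * dd 2 m) (fun m => by
    unfold qq dd
    rcases eq_or_ne m 2 with rfl | h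
    · norm_num
    · simp [h]) n, cv_smul_right, cv_dd_right]

lemma rel7 (N : ℕ) (hN : 2 ≤ N) :
    br (H N) (E N)
      = -(((1:ℂ)/2) • ((T N + T' N) * E N + E N * (T N + T' N))) := by
  rw [br, H_w, E_w, T_w, T'_w]
  simp only [mul_add, add_mul, mul_sub, sub_mul, mul_assoc, smul_add, smul_sub,
    mul_smul_comm,
    R1 N hN, R1e N hN, R1' N hN, R1'e N hN, R2 N hN, R2e N hN, R3 N hN, R3e N hN,
    R4 N, R4e N, R5qq N, R5qqe N, R5dqq N, R5dqqe N, R6qq N, R6qqe N, R6dd1 N, R6dd1e N, RS N, RSe N]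
  ext n
  simp only [map_add, map_sub, map_neg, PowerSeries.coeff_smul, ← map_mul,
    CC_eq, PowerSeries.coeff_mul_C, PowerSeries.coeff_C_mul, co_w,
    Nat.sub_zero, smul_mul_assoc, mul_smul_comm]
  match_scalars
  · ring
  · -- B2 slot
    rw [cv_scc_dqq, cv_qq_l (fun m => 2 * ((m:ℂ) * scc m)) n,
        cv_qq_r tcc n, cv_qq_r tcc' n, cv_qq_l tcc n, cv_qq_l tcc' n]
    rcases Nat.lt_or_ge n 4 with h | h
    · interval_cases n <;>
        norm_num [tcc, tcc', dd, scc_zero, scc_one, scc_two, scc_three]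
    · have h2 : 2 ≤ n := by omega
      have hA1 := A1 n
      rw [if_pos h2, if_pos h2] at hA1
      have hc2 : ((n-2:ℕ):ℂ) = (n:ℂ) - 2 := by
        rw [Nat.cast_sub h2]; norm_num
      simp only [if_pos h2, tcc, tcc', dd, hc2]
      split_ifs <;> first | (exfalso; omega) | linear_combination hA1
  · -- B1 slot
    rw [cv_comm scc qq, cv_qq_l (fun m => 2 * ((m:ℂ) * (2 * ((m:ℂ) * scc m)))) n,
        cv_qq_l (fun m => 2 * ((m:ℂ) * tcc m)) n,
        cv_qq_l (fun m => 2 * ((m:ℂ) * tcc' m)) n]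
    rcases Nat.lt_or_ge n 4 with h | h
    · interval_cases n <;>
        norm_num [tcc, tcc', dd, scc_zero, scc_one, scc_two, scc_three]
    · have h2 : 2 ≤ n := by omega
      have hA1 := A1 n
      rw [if_pos h2, if_pos h2] at hA1
      have hA2 := A2 n
      rw [if_pos h2, if_pos h2] at hA2
      have hc2 : ((n-2:ℕ):ℂ) = (n:ℂ) - 2 := by
        rw [Nat.cast_sub h2]; norm_num
      simp only [if_pos h2, tcc, tcc', dd, hc2]
      split_ifs <;> first | (exfalso; omega) | linear_combination hA2 - hA1
  · -- F slot
    simp only [tcc, tcc']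
    ring
  · -- B0 slot
    rw [cv_scc_dqq,
        cv_qq_r tcc n, cv_qq_r tcc' n, cv_qq_l tcc n, cv_qq_l tcc' n,
        cv_qq_l (fun m => 2 * ((m:ℂ) * (2 * ((m:ℂ) * tcc m)))) n,
        cv_qq_l (fun m => 2 * ((m:ℂ) * (2 * ((m:ℂ) * tcc' m)))) n]
    rcases Nat.lt_or_ge n 4 with h | h
    · interval_cases n <;>
        norm_num [tcc, tcc', dd, scc_zero, scc_one, scc_two, scc_three]
    · have h2 : 2 ≤ n := by omega
      have hA2 := A2 n
      rw [if_pos h2, if_pos h2] at hA2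
      have hc2 : ((n-2:ℕ):ℂ) = (n:ℂ) - 2 := by
        rw [Nat.cast_sub h2]; norm_num
      simp only [if_pos h2, tcc, tcc', dd, hc2]
      split_ifs <;> first | (exfalso; omega) | linear_combination -hA2
  · -- B3 slot
    rw [cv_comm scc qq]
    ring

/-- for every `N ≥ 2`, the elements `T`, `T'`, `H`, `E` built from the
longest bosonic root vector `e_{1N}` of `U(gl(N|1))[[t]]` satisfy the Jordanian
`U_h(sl(2))` relations. -/
theorem statement19 (N : ℕ) (hN : 2 ≤ N) :
    T N * T' N = 1 ∧ T' N * T N = 1 ∧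
    br (H N) (T N) = T N ^ 2 - 1 ∧
    br (H N) (T' N) = T' N ^ 2 - 1 ∧
    br (T N) (E N) = ((1 : ℂ) / 2) • (tv N * (H N * T N + T N * H N)) ∧
    br (T' N) (E N) = -(((1 : ℂ) / 2) • (tv N * (H N * T' N + T' N * H N))) ∧
    br (H N) (E N) =
      -(((1 : ℂ) / 2) • ((T N + T' N) * E N + E N * (T N + T' N))) :=
  ⟨rel1 N, rel2 N, rel3 N hN, rel4 N hN, rel5 N hN, rel6 N hN, rel7 N hN⟩

end SuperJordanian
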